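/- Let $n \ge 1$, $a \ge 1$, $b \ge 1$ and let $H$ be the $n \times n$ matrix with diagonal entries $a + (n-1)b$ and off-diagonal entries $b$ (the truncated signless Laplacian of the complete multigraph $K_{n+1}^{a,b}$). Let $J_H \subseteq R = K[x_1,\ldots,x_n]$ be the ideal generated by $x_t^{a+(n-1)b}$ for all $t$ and $x_i^{a+(n-2)b} x_j^{a+(n-2)b}$ for all $i < j$. Then $\dim_K(R/J_H) = \det H = (a+(n-2)b)^{n-1}(a+2(n-1)b)$. -/

import Mathlib

open MvPolynomial Finset

/-- The determinant of the `n × n` matrix with diagonal `c + b` and off-diagonal `b`. -/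
theorem det_aux (n : ℕ) (hn : 1 ≤ n) (c b : ℚ) (hc : c ≠ 0) :
    (Matrix.of fun i j : Fin n => if i = j then c + b else b).det =
      c ^ (n - 1) * (c + n * b) := by
  have hM : (Matrix.of fun i j : Fin n => if i = j then c + b else b)
      = c • (1 + Matrix.replicateCol Unit (fun _ => b / c) * Matrix.replicateRow Unit (fun _ => (1 : ℚ))) := by
    ext i j
    simp only [Matrix.of_apply, Matrix.smul_apply, Matrix.add_apply, Matrix.one_apply,
      Matrix.mul_apply, Matrix.replicateCol_apply, Matrix.replicateRow_apply, Finset.univ_unique,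
      Finset.sum_singleton, smul_eq_mul, mul_one]
    split <;> field_simp <;> ring
  rw [hM, Matrix.det_smul, Matrix.det_one_add_replicateCol_mul_replicateRow, Fintype.card_fin]
  have hdot : dotProduct (fun _ : Fin n => (1 : ℚ)) (fun _ => b / c) = n * (b / c) := by
    simp [dotProduct]
  rw [hdot]
  have hpow : c ^ n = c ^ (n - 1) * c := by
    conv_lhs => rw [show n = (n - 1) + 1 by omega]
    rw [pow_succ]
  rw [hpow]
  field_simp

/-- Generic: the finrank of a quotient of a multivariate polynomial ring by a monomial ideal
equals the number of standard monomials. -/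
theorem quot_monomial_finrank {σ : Type*} (K : Type*) [Field K]
    (S : Set (σ →₀ ℕ)) {T : Type*} [Fintype T]
    (e : T ≃ {m : σ →₀ ℕ // ¬ ∃ s ∈ S, s ≤ m}) :
    Module.finrank K (MvPolynomial σ K ⧸ Ideal.span ((fun s => monomial s (1 : K)) '' S)) =
      Fintype.card T := by
  classical
  set J : Ideal (MvPolynomial σ K) := Ideal.span ((fun s => monomial s (1 : K)) '' S) with hJdef
  have hmem : ∀ p : MvPolynomial σ K, p ∈ J ↔ ∀ m ∈ p.support, ∃ s ∈ S, s ≤ m := fun p =>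
    mem_ideal_span_monomial_image
  set w : T → MvPolynomial σ K := fun t => monomial (e t).1 1 with hw
  set v : T → MvPolynomial σ K ⧸ J := fun t => Submodule.Quotient.mk (w t) with hv
  have hvw : ∀ l : T →₀ K, Finsupp.linearCombination K v l
      = J.mkQ (Finsupp.linearCombination K w l) := by
    intro l
    rw [Finsupp.linearCombination_apply, Finsupp.linearCombination_apply, Finsupp.sum,
      Finsupp.sum, map_sum]
    exact Finset.sum_congr rfl fun t _ => (Submodule.Quotient.mk_smul J (l t) (w t)).symm
  have hwli : LinearIndependent K w := by
    have h := (basisMonomials σ K).linearIndependent.comp (fun t => (e t).1)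
      (fun t₁ t₂ h => e.injective (Subtype.val_injective h))
    simpa [Function.comp_def, hw] using h
  have hli : LinearIndependent K v := by
    rw [linearIndependent_iff]
    intro l hl
    rw [hvw] at hl
    have hq : Finsupp.linearCombination K w l ∈ J := by
      rwa [Submodule.mkQ_apply, Submodule.Quotient.mk_eq_zero] at hl
    have hsup : ∀ m ∈ (Finsupp.linearCombination K w l).support, ∃ t, (e t).1 = m := by
      intro m hm
      rw [Finsupp.linearCombination_apply, Finsupp.sum] at hm
      obtain ⟨t, -, htm⟩ := Finset.mem_biUnion.mp (MvPolynomial.support_sum hm)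
      have h2 : m ∈ (monomial (e t).1 (1 : K)).support := MvPolynomial.support_smul htm
      rw [MvPolynomial.support_monomial] at h2
      simp only [one_ne_zero, if_false, Finset.mem_singleton] at h2
      exact ⟨t, h2.symm⟩
    have hemp : (Finsupp.linearCombination K w l).support = ∅ := by
      by_contra h
      obtain ⟨m, hm⟩ := Finset.nonempty_of_ne_empty h
      obtain ⟨t, rfl⟩ := hsup m hm
      exact (e t).2 ((hmem _).mp hq _ hm)
    have hq0 : Finsupp.linearCombination K w l = 0 :=
      MvPolynomial.support_eq_empty.mp hemp
    exact linearIndependent_iff.mp hwli l hq0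
  have hsp : ⊤ ≤ Submodule.span K (Set.range v) := by
    rintro x -
    obtain ⟨p, rfl⟩ := Submodule.Quotient.mk_surjective J x
    induction p using MvPolynomial.induction_on' with
    | monomial u c =>
      by_cases hu : ∃ s ∈ S, s ≤ u
      · have hmem' : monomial u c ∈ J := by
          rw [hmem]
          intro m hm
          rw [MvPolynomial.support_monomial] at hm
          rcases eq_or_ne c 0 with h | h
          · simp [h] at hm
          · simp only [h, if_false, Finset.mem_singleton] at hm
            subst hm; exact hu
        have h0 : (Submodule.Quotient.mk (monomial u c) : MvPolynomial σ K ⧸ J) = 0 :=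
          (Submodule.Quotient.mk_eq_zero J).mpr hmem'
        rw [h0]; exact Submodule.zero_mem _
      · have h0 : (Submodule.Quotient.mk (monomial u c) : MvPolynomial σ K ⧸ J)
            = c • v (e.symm ⟨u, hu⟩) := by
          rw [hv]
          simp only
          rw [← Submodule.Quotient.mk_smul]
          congr 1
          rw [hw]
          simp only [Equiv.apply_symm_apply, MvPolynomial.smul_monomial, smul_eq_mul, mul_one]
        rw [h0]
        exact Submodule.smul_mem _ _ (Submodule.subset_span ⟨_, rfl⟩)
    | add p q hp hq =>
      rw [Submodule.Quotient.mk_add]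
      exact Submodule.add_mem _ hp hq
  exact Module.finrank_eq_card_basis (Module.Basis.mk hli hsp)

/-- Counting functions `Fin n → Fin D` with at most one coordinate `≥ d`. -/
theorem count_aux (n D d : ℕ) (hdD : d ≤ D) :
    (Finset.univ.filter fun f : Fin n → Fin D => ∀ i j : Fin n,
        d ≤ (f i : ℕ) → d ≤ (f j : ℕ) → i = j).card
      = d ^ n + n * ((D - d) * d ^ (n - 1)) := by
  classical
  set small : Finset (Fin D) := Finset.univ.filter fun x : Fin D => (x : ℕ) < d with hsmall
  set big : Finset (Fin D) := Finset.univ.filter fun x : Fin D => d ≤ (x : ℕ) with hbig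
  have hsmallcard : small.card = d := by
    have himg : small = (Finset.univ : Finset (Fin d)).image (Fin.castLE hdD) := by
      ext x
      rw [hsmall, Finset.mem_filter, Finset.mem_image]
      constructor
      · rintro ⟨-, hx⟩
        exact ⟨⟨x.1, hx⟩, Finset.mem_univ _, by ext; rfl⟩
      · rintro ⟨y, -, rfl⟩
        exact ⟨Finset.mem_univ _, y.2⟩
    rw [himg, Finset.card_image_of_injective _ (Fin.castLE_injective hdD), Finset.card_univ,
      Fintype.card_fin]
  have hbigcard : big.card = D - d := by
    have hcompl : big = Finset.univ.filter fun x : Fin D => ¬ (x : ℕ) < d := by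
      simp [hbig, not_lt]
    have h := Finset.card_filter_add_card_filter_not
      (s := (Finset.univ : Finset (Fin D))) (p := fun x : Fin D => (x : ℕ) < d)
    rw [Finset.card_univ, Fintype.card_fin] at h
    rw [hcompl]
    rw [← hsmall] at h
    omega
  set P : (Fin n → Fin D) → Prop := fun f => ∀ i j : Fin n,
    d ≤ (f i : ℕ) → d ≤ (f j : ℕ) → i = j with hP
  set A : Finset (Fin n → Fin D) := Finset.univ.filter P with hA
  set g : (Fin n → Fin D) → Finset (Fin n) :=
    fun f => Finset.univ.filter fun i => d ≤ (f i : ℕ) with hg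
  set t : Finset (Finset (Fin n)) :=
    insert ∅ (Finset.univ.image fun i : Fin n => ({i} : Finset (Fin n))) with ht
  have hgt : ∀ f ∈ A, g f ∈ t := by
    intro f hf
    rw [hA, Finset.mem_filter] at hf
    rcases (g f).eq_empty_or_nonempty with h | ⟨i, hi⟩
    · rw [ht, h]; exact Finset.mem_insert_self _ _
    · have hsing : g f = {i} := by
        rw [Finset.eq_singleton_iff_unique_mem]
        refine ⟨hi, fun j hj => ?_⟩
        rw [hg, Finset.mem_filter] at hj
        have hi' := hi
        rw [hg, Finset.mem_filter] at hi'
        exact hf.2 j i hj.2 hi'.2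
      rw [ht, hsing]
      exact Finset.mem_insert_of_mem (Finset.mem_image_of_mem _ (Finset.mem_univ i))
  rw [Finset.card_eq_sum_card_fiberwise hgt]
  have hne : (∅ : Finset (Fin n)) ∉ Finset.univ.image fun i : Fin n => ({i} : Finset (Fin n)) := by
    simp
  rw [ht, Finset.sum_insert hne,
    Finset.sum_image (fun i _ j _ h => Finset.singleton_injective h)]
  have h0 : A.filter (fun f => g f = ∅) = Fintype.piFinset fun _ : Fin n => small := by
    ext f
    rw [Finset.mem_filter, Fintype.mem_piFinset]
    constructor
    · rintro ⟨-, h⟩ i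
      rw [hg, Finset.filter_eq_empty_iff] at h
      have hi := h (Finset.mem_univ i)
      rw [hsmall, Finset.mem_filter]
      exact ⟨Finset.mem_univ _, by omega⟩
    · intro h
      have hsm : ∀ i, (f i : ℕ) < d := by
        intro i
        have hi := h i
        rw [hsmall, Finset.mem_filter] at hi
        exact hi.2
      refine ⟨Finset.mem_filter.mpr ⟨Finset.mem_univ _, fun i j hi _ => absurd hi (by
        have := hsm i; omega)⟩, ?_⟩
      rw [hg, Finset.filter_eq_empty_iff]
      intro i _
      have := hsm i
      omega
  have h1 : ∀ i : Fin n, A.filter (fun f => g f = {i})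
      = Fintype.piFinset fun j : Fin n => if j = i then big else small := by
    intro i
    ext f
    rw [Finset.mem_filter, Fintype.mem_piFinset]
    constructor
    · rintro ⟨-, h⟩ j
      have hj := Finset.ext_iff.mp h j
      rw [hg, Finset.mem_filter, Finset.mem_singleton] at hj
      by_cases hji : j = i
      · rw [if_pos hji, hbig, Finset.mem_filter]
        refine ⟨Finset.mem_univ _, ?_⟩
        subst hji
        exact (hj.mpr rfl).2
      · rw [if_neg hji, hsmall, Finset.mem_filter]
        refine ⟨Finset.mem_univ _, ?_⟩
        by_contra hlt
        exact hji (hj.mp ⟨Finset.mem_univ _, not_lt.mp hlt⟩)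
    · intro h
      have hbigj : ∀ j : Fin n, d ≤ (f j : ℕ) → j = i := by
        intro j hj
        by_contra hji
        have hcon := h j
        rw [if_neg hji, hsmall, Finset.mem_filter] at hcon
        omega
      have hfi : d ≤ (f i : ℕ) := by
        have hcon := h i
        rw [if_pos rfl, hbig, Finset.mem_filter] at hcon
        exact hcon.2
      refine ⟨Finset.mem_filter.mpr ⟨Finset.mem_univ _,
        fun j k hj hk => (hbigj j hj).trans (hbigj k hk).symm⟩, ?_⟩
      rw [hg]
      ext j
      rw [Finset.mem_filter, Finset.mem_singleton]
      constructor
      · rintro ⟨-, hj⟩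
        exact hbigj j hj
      · rintro rfl
        exact ⟨Finset.mem_univ _, hfi⟩

  rw [h0]
  have h2 : ∀ i : Fin n,
      (Fintype.piFinset fun j : Fin n => if j = i then big else small).card
        = (D - d) * d ^ (n - 1) := by
    intro i
    rw [Fintype.card_piFinset]
    have hterm : ∀ j : Fin n, (if j = i then big else small).card
        = if j = i then D - d else d := by
      intro j; split <;> simp [hbigcard, hsmallcard]
    rw [Finset.prod_congr rfl fun j _ => hterm j]
    rw [← Finset.mul_prod_erase Finset.univ _ (Finset.mem_univ i), if_pos rfl]
    congr 1
    rw [Finset.prod_congr rfl fun j hj => if_neg (Finset.ne_of_mem_erase hj)]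
    rw [Finset.prod_const, Finset.card_erase_of_mem (Finset.mem_univ i), Finset.card_univ,
      Fintype.card_fin]
  rw [Finset.sum_congr rfl fun i _ => by rw [h1 i, h2 i]]
  rw [Fintype.card_piFinset]
  simp [hsmallcard, Finset.sum_const, Finset.card_univ, mul_comm]

theorem stmt15 (K : Type*) [Field K] (n a b : ℕ) (hn : 1 ≤ n) (ha : 1 ≤ a) (hb : 1 ≤ b)
    (H : Matrix (Fin n) (Fin n) ℤ)
    (hH : ∀ i j, H i j = if i = j then ((a + (n - 1) * b : ℕ) : ℤ) else (b : ℤ))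
    (J : Ideal (MvPolynomial (Fin n) K))
    (hJ : J = Ideal.span
      ((Set.range fun t => (X t : MvPolynomial (Fin n) K) ^ (a + (n - 1) * b)) ∪
        {m | ∃ i j : Fin n, i < j ∧
          m = X i ^ (a + (n - 2) * b) * X j ^ (a + (n - 2) * b)})) :
    (Module.finrank K (MvPolynomial (Fin n) K ⧸ J) : ℤ) = H.det ∧
      H.det = ((a + (n - 2) * b : ℕ) : ℤ) ^ (n - 1) * ((a + 2 * (n - 1) * b : ℕ) : ℤ) := by
  classical
  set D : ℕ := a + (n - 1) * b with hD
  set d : ℕ := a + (n - 2) * b with hd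
  have hdD : d ≤ D := by
    apply Nat.add_le_add_left
    exact Nat.mul_le_mul_right _ (by omega)
  -- the set of generator exponents
  set S : Set (Fin n →₀ ℕ) :=
    (Set.range fun t : Fin n => Finsupp.single t D) ∪
      {s | ∃ i j : Fin n, i < j ∧ s = Finsupp.single i d + Finsupp.single j d} with hS
  have hJS : J = Ideal.span ((fun s => monomial s (1 : K)) '' S) := by
    rw [hJ, hS]
    congr 1
    rw [Set.image_union]
    congr 1
    · ext q
      simp only [Set.mem_range, Set.mem_image]
      constructor
      · rintro ⟨t, rfl⟩
        exact ⟨Finsupp.single t D, ⟨t, rfl⟩, X_pow_eq_monomial.symm⟩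
      · rintro ⟨s, ⟨t, rfl⟩, rfl⟩
        exact ⟨t, X_pow_eq_monomial⟩
    · ext m
      constructor
      · rintro ⟨i, j, hij, rfl⟩
        exact ⟨Finsupp.single i d + Finsupp.single j d, ⟨i, j, hij, rfl⟩, by
          rw [X_pow_eq_monomial, X_pow_eq_monomial, monomial_mul, one_mul]⟩
      · rintro ⟨s, ⟨i, j, hij, rfl⟩, rfl⟩
        exact ⟨i, j, hij, by rw [X_pow_eq_monomial, X_pow_eq_monomial, monomial_mul, one_mul]⟩
  have hpair : ∀ (i j : Fin n), i ≠ j → ∀ m : Fin n →₀ ℕ,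
      (Finsupp.single i d + Finsupp.single j d ≤ m ↔ d ≤ m i ∧ d ≤ m j) := by
    intro i j hij m
    rw [Finsupp.le_def]
    constructor
    · intro h
      constructor
      · have := h i
        simpa [Finsupp.single_apply, hij, Ne.symm hij] using this
      · have := h j
        simpa [Finsupp.single_apply, hij, Ne.symm hij] using this
    · rintro ⟨h1, h2⟩ k
      rcases eq_or_ne i k with rfl | hki
      · simpa [Finsupp.single_apply, hij, Ne.symm hij] using h1
      rcases eq_or_ne j k with rfl | hkj
      · simpa [Finsupp.single_apply, hij, Ne.symm hij] using h2
      · simp [Finsupp.single_apply, hki, hkj]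
  have hgood : ∀ m : Fin n →₀ ℕ, (¬ ∃ s ∈ S, s ≤ m) ↔
      ((∀ i, m i < D) ∧ ∀ i j, d ≤ m i → d ≤ m j → i = j) := by
    intro m
    constructor
    · intro h
      constructor
      · intro i
        by_contra hi
        exact h ⟨Finsupp.single i D, Or.inl ⟨i, rfl⟩, Finsupp.single_le_iff.mpr (not_lt.mp hi)⟩
      · intro i j hi hj
        by_contra hij
        rcases Ne.lt_or_gt hij with hlt | hlt
        · exact h ⟨_, Or.inr ⟨i, j, hlt, rfl⟩, (hpair i j hij m).mpr ⟨hi, hj⟩⟩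
        · exact h ⟨_, Or.inr ⟨j, i, hlt, rfl⟩, (hpair j i (Ne.symm hij) m).mpr ⟨hj, hi⟩⟩
    · rintro ⟨h1, h2⟩ ⟨s, hs, hsm⟩
      rcases hs with ⟨t, rfl⟩ | ⟨i, j, hij, rfl⟩
      · exact absurd (Finsupp.single_le_iff.mp hsm) (not_le.mpr (h1 t))
      · obtain ⟨hi, hj⟩ := (hpair i j hij.ne m).mp hsm
        exact absurd (h2 i j hi hj) hij.ne
  set P : (Fin n → Fin D) → Prop := fun f => ∀ i j : Fin n,
    d ≤ (f i : ℕ) → d ≤ (f j : ℕ) → i = j with hP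
  let eqv : {f : Fin n → Fin D // P f} ≃ {m : Fin n →₀ ℕ // ¬ ∃ s ∈ S, s ≤ m} :=
    { toFun := fun f => ⟨Finsupp.equivFunOnFinite.symm fun i => (f.1 i : ℕ), by
        rw [hgood]
        refine ⟨fun i => ?_, fun i j hi hj => f.2 i j (by simpa using hi) (by simpa using hj)⟩
        simpa using (f.1 i).2⟩
      invFun := fun m => ⟨fun i => ⟨m.1 i, ((hgood m.1).mp m.2).1 i⟩,
        fun i j hi hj => ((hgood m.1).mp m.2).2 i j hi hj⟩
      left_inv := fun f => by
        ext i
        simp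
      right_inv := fun m => by
        ext i
        simp }
  have hcount : Module.finrank K (MvPolynomial (Fin n) K ⧸ J)
      = d ^ n + n * ((D - d) * d ^ (n - 1)) := by
    rw [hJS]
    rw [quot_monomial_finrank K S eqv]
    rw [Fintype.card_subtype]
    exact count_aux n D d hdD
  have harith : d ^ n + n * ((D - d) * d ^ (n - 1)) = d ^ (n - 1) * (a + 2 * (n - 1) * b) := by
    rcases Nat.lt_or_ge n 2 with h2 | h2
    · have hn1 : n = 1 := by omega
      subst hn1
      simp only [hD, hd, pow_one, pow_zero, Nat.sub_self, one_mul, mul_one]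
      omega
    · obtain ⟨m, rfl⟩ : ∃ m, n = m + 2 := ⟨n - 2, by omega⟩
      rw [hD, hd]
      rw [show m + 2 - 1 = m + 1 from rfl, show m + 2 - 2 = m from rfl]
      have hDd : a + (m + 1) * b - (a + m * b) = b := by
        rw [add_one_mul]; omega
      rw [hDd, pow_succ]
      ring
  have hdet : H.det = ((d : ℕ) : ℤ) ^ (n - 1) * ((a + 2 * (n - 1) * b : ℕ) : ℤ) := by
    rcases Nat.lt_or_ge n 2 with h2 | h2
    · have hn1 : n = 1 := by omega
      subst hn1
      rw [Matrix.det_fin_one, hH 0 0, if_pos rfl]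
      simp only [hD, hd]
      norm_num
    · obtain ⟨m, rfl⟩ : ∃ m, n = m + 2 := ⟨n - 2, by omega⟩
      apply (Int.cast_injective (α := ℚ))
      push_cast
      have hmap : H.map (Int.cast : ℤ → ℚ)
          = Matrix.of fun i j : Fin (m + 2) => if i = j then ((d : ℚ) + b) else (b : ℚ) := by
        ext i j
        rw [Matrix.map_apply, hH i j, Matrix.of_apply]
        split
        · rw [hD, hd]
          rw [show m + 2 - 1 = m + 1 from rfl, show m + 2 - 2 = m from rfl]
          push_cast
          ring
        · simp
      rw [hmap, det_aux (m + 2) (by omega) _ _ (by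
        rw [hd]
        have : (1 : ℚ) ≤ ((a : ℚ)) := by exact_mod_cast ha
        push_cast
        positivity)]
      rw [hd]
      rw [show m + 2 - 1 = m + 1 from rfl, show m + 2 - 2 = m from rfl]
      push_cast
      ring
  refine ⟨?_, ?_⟩
  · rw [hdet, hcount, harith]
    push_cast
    ring
  · exact hdet
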